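/- For any n×n real matrix A, any n×n orthogonal matrix V, and any symmetric matrices H_1 and H_2, the following equality holds: ( V (Diag^{(12)} A) Vᵀ )[H_1, H_2] = ⟨ V ( A ∘ (Vᵀ H_1 V) ) Vᵀ , H_2 ⟩, where ∘ stands for the ordinary (entrywise) Hadamard product of matrices and ⟨X,Y⟩ = tr(XYᵀ). -/

import Mathlib

open Matrix

noncomputable section

/-- The space of `n × n` real matrices. -/
abbrev Mat (n : ℕ) := Matrix (Fin n) (Fin n) ℝ

/-- A `k`-tensor on `ℝ^n`. -/
abbrev Tens (k n : ℕ) := (Fin k → Fin n) → ℝ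

/-- A `2k`-tensor on `ℝ^n`, indices grouped into `k` upper and `k` lower ones. -/
abbrev Tens2 (k n : ℕ) := (Fin k → Fin n) → (Fin k → Fin n) → ℝ

/-- `Diag^σ T`. -/
def DiagS {k n : ℕ} (σ : Equiv.Perm (Fin k)) (T : Tens k n) : Tens2 k n :=
  fun i j => if ∀ s : Fin k, i s = j (σ s) then T i else 0

/-- Action of a `2k`-tensor on `k` matrices. -/
def app2 {k n : ℕ} (S : Tens2 k n) (H : Fin k → Mat n) : ℝ :=
  ∑ p : Fin k → Fin n, ∑ q : Fin k → Fin n, S p q * ∏ s : Fin k, H s (p s) (q s)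

/-- Conjugation of a `2k`-tensor by an orthogonal matrix. -/
def conj2 {k n : ℕ} (V : Mat n) (S : Tens2 k n) : Tens2 k n :=
  fun i j => ∑ p : Fin k → Fin n, ∑ q : Fin k → Fin n,
    S p q * (∏ s : Fin k, V (i s) (p s)) * ∏ s : Fin k, V (j s) (q s)

/-- An `n × n` matrix regarded as a `2`-tensor on `ℝ^n`. -/
def matTens {n : ℕ} (A : Mat n) : Tens 2 n := fun i => A (i 0) (i 1)

/-- A sum over `Fin 2 → Fin n` as a double sum. -/
lemma sum_fin2 {n : ℕ} (f : (Fin 2 → Fin n) → ℝ) :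
    ∑ p, f p = ∑ a : Fin n, ∑ b : Fin n, f ![a, b] := by
  rw [← Equiv.sum_comp (finTwoArrowEquiv (Fin n)).symm f, Fintype.sum_prod_type]
  rfl

lemma sum_shift {α : Type*} [Fintype α] (g : α → α → α → α → α → α → ℝ) :
    ∑ x, ∑ x1, ∑ x2, ∑ x3, ∑ e, ∑ f, g x x1 x2 x3 e f
    = ∑ e, ∑ f, ∑ x, ∑ x1, ∑ x2, ∑ x3, g x x1 x2 x3 e f := by
  calc ∑ x, ∑ x1, ∑ x2, ∑ x3, ∑ e, ∑ f, g x x1 x2 x3 e f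
      = ∑ P : α × α × α × α, ∑ e, ∑ f, g P.1 P.2.1 P.2.2.1 P.2.2.2 e f := by
        simp [Fintype.sum_prod_type]
    _ = ∑ e, ∑ f, ∑ P : α × α × α × α, g P.1 P.2.1 P.2.2.1 P.2.2.2 e f := by
        rw [Finset.sum_comm]; exact Finset.sum_congr rfl fun e _ => Finset.sum_comm
    _ = _ := by simp [Fintype.sum_prod_type]

lemma reorder4 {α : Type*} [Fintype α] (h : α → α → α → α → ℝ) :
    ∑ x, ∑ x1, ∑ x2, ∑ x3, h x x1 x2 x3 = ∑ x3, ∑ x1, ∑ x2, ∑ x, h x x1 x2 x3 := by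
  calc ∑ x, ∑ x1, ∑ x2, ∑ x3, h x x1 x2 x3
      = ∑ x, ∑ x1, ∑ x3, ∑ x2, h x x1 x2 x3 :=
        Finset.sum_congr rfl fun _ _ => Finset.sum_congr rfl fun _ _ => Finset.sum_comm
    _ = ∑ x, ∑ x3, ∑ x1, ∑ x2, h x x1 x2 x3 :=
        Finset.sum_congr rfl fun _ _ => Finset.sum_comm
    _ = ∑ x3, ∑ x, ∑ x1, ∑ x2, h x x1 x2 x3 := Finset.sum_comm
    _ = ∑ x3, ∑ x1, ∑ x, ∑ x2, h x x1 x2 x3 :=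
        Finset.sum_congr rfl fun _ _ => Finset.sum_comm
    _ = _ := Finset.sum_congr rfl fun _ _ => Finset.sum_congr rfl fun _ _ => Finset.sum_comm

lemma reverse4 {α : Type*} [Fintype α] (g : α → α → α → α → ℝ) :
    ∑ a, ∑ b, ∑ c, ∑ d, g a b c d = ∑ d, ∑ c, ∑ b, ∑ a, g a b c d := by
  calc ∑ a, ∑ b, ∑ c, ∑ d, g a b c d
      = ∑ P : α × α, ∑ Q : α × α, g P.1 P.2 Q.1 Q.2 := by simp [Fintype.sum_prod_type]
    _ = ∑ Q : α × α, ∑ P : α × α, g P.1 P.2 Q.1 Q.2 := Finset.sum_comm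
    _ = ∑ c, ∑ d, ∑ a, ∑ b, g a b c d := by simp [Fintype.sum_prod_type]
    _ = ∑ d, ∑ c, ∑ a, ∑ b, g a b c d := Finset.sum_comm
    _ = _ := Finset.sum_congr rfl fun _ _ => Finset.sum_congr rfl fun _ _ => Finset.sum_comm

lemma vec2_0 {n : ℕ} (a b : Fin n) : ![a, b] 0 = a := by simp

lemma vec2_1 {n : ℕ} (a b : Fin n) : ![a, b] 1 = b := by simp

/-- `(V (Diag^{(12)} A) Vᵀ)[H₁,H₂] = ⟨V (A ∘ (Vᵀ H₁ V)) Vᵀ, H₂⟩` for any matrix `A`,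
orthogonal `V` and symmetric `H₁, H₂`. -/
theorem statement10 {n : ℕ} (A : Mat n)
    (V : Mat n) (hV1 : Vᵀ * V = 1) (hV2 : V * Vᵀ = 1)
    (H₁ H₂ : Mat n) (hH₁ : H₁.IsSymm) (hH₂ : H₂.IsSymm) :
    app2 (conj2 V (DiagS (Equiv.swap 0 1) (matTens A))) ![H₁, H₂] =
      Matrix.trace
        ((V * (Matrix.of fun i j => A i j * (Vᵀ * H₁ * V) i j) * Vᵀ) * H₂ᵀ) := by
  have hL : app2 (conj2 V (DiagS (Equiv.swap 0 1) (matTens A))) ![H₁, H₂] =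
      ∑ e : Fin n, ∑ f : Fin n, A e f * ((Vᵀ * H₁ * V) e f * (Vᵀ * H₂ * V) f e) := by
    simp only [app2, conj2, DiagS, matTens, sum_fin2, Fin.forall_fin_two,
      Equiv.swap_apply_left, Equiv.swap_apply_right, vec2_0, vec2_1]
    simp only [app2, conj2, DiagS, matTens, sum_fin2, Fin.prod_univ_two,
      Matrix.cons_val_zero, Matrix.cons_val_one, Matrix.head_cons,
      Fin.forall_fin_two, Equiv.swap_apply_left, Equiv.swap_apply_right,
      ite_and, ite_mul, zero_mul, Finset.sum_ite_eq, Finset.mem_univ, if_true]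
    simp only [Finset.sum_mul]
    rw [sum_shift (fun x x1 x2 x3 e f =>
      A e f * (V x e * V x1 f) * (V x2 f * V x3 e) * (H₁ x x2 * H₂ x1 x3))]
    refine Finset.sum_congr rfl fun e _ => Finset.sum_congr rfl fun f _ => ?_
    rw [reorder4 (fun x x1 x2 x3 =>
      A e f * (V x e * V x1 f) * (V x2 f * V x3 e) * (H₁ x x2 * H₂ x1 x3))]
    simp only [mul_apply, transpose_apply, Finset.mul_sum, Finset.sum_mul]
    refine Finset.sum_congr rfl fun x3 _ => Finset.sum_congr rfl fun x1 _ =>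
      Finset.sum_congr rfl fun x2 _ => Finset.sum_congr rfl fun x _ => ?_
    ring
  have hR : Matrix.trace
        ((V * (Matrix.of fun i j => A i j * (Vᵀ * H₁ * V) i j) * Vᵀ) * H₂ᵀ) =
      ∑ e : Fin n, ∑ f : Fin n, A e f * ((Vᵀ * H₁ * V) e f * (Vᵀ * H₂ * V) e f) := by
    rw [hH₂.eq]
    simp only [trace, diag, mul_apply, transpose_apply, of_apply, Finset.sum_mul,
      Finset.mul_sum]
    rw [reverse4 (fun x x1 x2 x3 => ∑ x4 : Fin n, ∑ i : Fin n,
      V x x3 * (A x3 x2 * (V i x3 * H₁ i x4 * V x4 x2)) * V x1 x2 * H₂ x1 x)]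
    refine Finset.sum_congr rfl fun e _ => Finset.sum_congr rfl fun f _ =>
      Finset.sum_congr rfl fun c _ => Finset.sum_congr rfl fun r _ =>
      Finset.sum_congr rfl fun x4 _ => Finset.sum_congr rfl fun i _ => ?_
    rw [hH₂.apply]
    ring
  have hCs : (Vᵀ * H₂ * V).IsSymm := by
    rw [Matrix.IsSymm, Matrix.transpose_mul, Matrix.transpose_mul,
      Matrix.transpose_transpose, hH₂.eq, Matrix.mul_assoc]
  rw [hL, hR]
  exact Finset.sum_congr rfl fun e _ => Finset.sum_congr rfl fun f _ => by
    rw [hCs.apply]
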